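/- Assume MA(σ-centered). Then there exists a proper dense subgroup G < Sym(Ω), for Ω countably infinite, which acts transitively (and is transitive on Ω itself) on the set of all linear orders on Ω of order type ℚ, under the action of Sym(Ω) on orders by transport of structure. -/

import Mathlib

def Centered {P : Type} [Preorder P] (Q : Set P) : Prop :=
  ∀ S : Finset P, ↑S ⊆ Q → ∃ p : P, ∀ q ∈ S, q ≤ p

def SigmaCentered (P : Type) [Preorder P] : Prop :=
  ∃ C : ℕ → Set P, (∀ n, Centered (C n)) ∧ (⋃ n, C n) = Set.univ

/-- Martin's Axiom for σ-centered partial orders: for any nonempty σ-centered partial order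
and any family of fewer than continuum many open dense subsets, there is a filter meeting
every member of the family. -/
def MASigmaCentered : Prop :=
  ∀ (P : Type) [Preorder P], Nonempty P → SigmaCentered P →
    ∀ 𝒟 : Set (Set P),
      (∀ D ∈ 𝒟, (∀ p ∈ D, ∀ q, p ≤ q → q ∈ D) ∧ (∀ p, ∃ q ∈ D, p ≤ q)) →
      Cardinal.mk ↥𝒟 < Cardinal.continuum →
      ∃ Q : Set P, Q.Nonempty ∧
        (∀ q₀ ∈ Q, ∀ q₁ ∈ Q, ∃ q ∈ Q, q₀ ≤ q ∧ q₁ ≤ q) ∧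
        (∀ p q : P, p ≤ q → q ∈ Q → p ∈ Q) ∧
        ∀ D ∈ 𝒟, (Q ∩ D).Nonempty

/-- `r` is a linear order on `Ω` of order type `ℚ`: a dense strict total order
without endpoints. -/
def QOrder {Ω : Type} (r : Ω → Ω → Prop) : Prop :=
  IsStrictTotalOrder Ω r ∧ (∀ a b, r a b → ∃ c, r a c ∧ r c b) ∧
    (∀ a, ∃ b, r a b) ∧ (∀ a, ∃ b, r b a)


namespace Nine42

attribute [local instance] Classical.propDecidable

variable {Ω : Type}

section order

variable {r : Ω → Ω → Prop}

lemma qTrans (h : QOrder r) {a b c : Ω} (h1 : r a b) (h2 : r b c) : r a c :=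
  h.1.toIsStrictOrder.toIsTrans.trans a b c h1 h2

lemma qIrrefl (h : QOrder r) (a : Ω) : ¬ r a a :=
  h.1.toIsStrictOrder.toIrrefl.irrefl a

lemma qTrichot (h : QOrder r) (a b : Ω) : r a b ∨ a = b ∨ r b a :=
  by
    by_cases h1 : r a b
    · exact Or.inl h1
    by_cases h2 : r b a
    · exact Or.inr (Or.inr h2)
    exact Or.inr (Or.inl (h.1.toTrichotomous.trichotomous a b h1 h2))

lemma qAsymm (h : QOrder r) {a b : Ω} (h1 : r a b) : ¬ r b a :=
  fun h2 => qIrrefl h a (qTrans h h1 h2)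

lemma qFlip (h : QOrder r) : QOrder (fun a b => r b a) := by
  obtain ⟨hsto, hd, hu, hl⟩ := h
  refine ⟨?_, ?_, hl, hu⟩
  · refine @IsStrictTotalOrder.mk _ _ ⟨?_⟩ (@IsStrictOrder.mk _ _ ⟨?_⟩ ⟨?_⟩)
    · intro a b h1 h2
      exact hsto.toTrichotomous.trichotomous a b h2 h1
    · intro a; exact hsto.toIsStrictOrder.toIrrefl.irrefl a
    · intro a b c h1 h2; exact hsto.toIsStrictOrder.toIsTrans.trans _ _ _ h2 h1
  · intro a b hab
    obtain ⟨c, h1, h2⟩ := hd b a hab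
    exact ⟨c, h2, h1⟩

/-- a finite set has an `r`-greatest element -/
lemma qExistsMax (h : QOrder r) (s : Finset Ω) (hs : s.Nonempty) :
    ∃ m ∈ s, ∀ x ∈ s, x ≠ m → r x m := by
  classical
  induction s using Finset.induction with
  | empty => simp at hs
  | @insert a s ha ih =>
    rcases s.eq_empty_or_nonempty with rfl | hsn
    · exact ⟨a, by simp, by simp⟩
    · obtain ⟨m, hm, hmax⟩ := ih hsn
      rcases qTrichot h a m with hc | hc | hc
      · refine ⟨m, by simp [hm], ?_⟩
        intro x hx hxm
        rcases Finset.mem_insert.1 hx with rfl | hx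
        · exact hc
        · exact hmax x hx hxm
      · exact absurd (hc ▸ hm) ha
      · refine ⟨a, by simp, ?_⟩
        intro x hx hxa
        rcases Finset.mem_insert.1 hx with rfl | hx
        · exact absurd rfl hxa
        · rcases eq_or_ne x m with rfl | hxm
          · exact hc
          · exact qTrans h (hmax x hx hxm) hc

lemma qExistsMin (h : QOrder r) (s : Finset Ω) (hs : s.Nonempty) :
    ∃ m ∈ s, ∀ x ∈ s, x ≠ m → r m x :=
  qExistsMax (qFlip h) s hs

/-- between any (compatible) finite lower set and upper set there is a point -/
lemma qExistsBetween (h : QOrder r) [Infinite Ω] (L R : Finset Ω)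
    (hLR : ∀ l ∈ L, ∀ u ∈ R, r l u) :
    ∃ b, (∀ l ∈ L, r l b) ∧ (∀ u ∈ R, r b u) := by
  classical
  rcases L.eq_empty_or_nonempty with rfl | hL
  · rcases R.eq_empty_or_nonempty with rfl | hR
    · obtain ⟨b⟩ := (inferInstance : Nonempty Ω); exact ⟨b, by simp, by simp⟩
    · obtain ⟨m, hm, hmin⟩ := qExistsMin h R hR
      obtain ⟨b, hb⟩ := h.2.2.2 m
      refine ⟨b, by simp, ?_⟩
      intro u hu
      rcases eq_or_ne u m with rfl | hum
      · exact hb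
      · exact qTrans h hb (hmin u hu hum)
  · obtain ⟨mL, hmL, hmaxL⟩ := qExistsMax h L hL
    have hup : ∀ l ∈ L, l = mL ∨ r l mL := by
      intro l hl; rcases eq_or_ne l mL with rfl | hlm
      · exact Or.inl rfl
      · exact Or.inr (hmaxL l hl hlm)
    rcases R.eq_empty_or_nonempty with rfl | hR
    · obtain ⟨b, hb⟩ := h.2.2.1 mL
      refine ⟨b, ?_, by simp⟩
      intro l hl
      rcases hup l hl with rfl | hlm
      · exact hb
      · exact qTrans h hlm hb
    · obtain ⟨mR, hmR, hminR⟩ := qExistsMin h R hR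
      have hdn : ∀ u ∈ R, u = mR ∨ r mR u := by
        intro u hu; rcases eq_or_ne u mR with rfl | hum
        · exact Or.inl rfl
        · exact Or.inr (hminR u hu hum)
      obtain ⟨b, hb1, hb2⟩ := h.2.1 mL mR (hLR mL hmL mR hmR)
      refine ⟨b, ?_, ?_⟩
      · intro l hl
        rcases hup l hl with rfl | hlm
        · exact hb1
        · exact qTrans h hlm hb1
      · intro u hu
        rcases hdn u hu with rfl | hum
        · exact hb2
        · exact qTrans h hb2 hum

lemma qInfiniteBetween (h : QOrder r) [Infinite Ω] (L R : Finset Ω)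
    (hLR : ∀ l ∈ L, ∀ u ∈ R, r l u) :
    {b | (∀ l ∈ L, r l b) ∧ (∀ u ∈ R, r b u)}.Infinite := by
  classical
  set S := {b | (∀ l ∈ L, r l b) ∧ (∀ u ∈ R, r b u)} with hS
  have step : ∀ x ∈ S, ∃ y, y ∈ S ∧ r y x := by
    intro x hx
    obtain ⟨y, hy1, hy2⟩ := qExistsBetween h L (insert x R) (by
      intro l hl u hu
      rcases Finset.mem_insert.1 hu with rfl | hu
      · exact hx.1 l hl
      · exact hLR l hl u hu)
    exact ⟨y, ⟨hy1, fun u hu => hy2 u (Finset.mem_insert_of_mem hu)⟩,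
      hy2 x (Finset.mem_insert_self x R)⟩
  obtain ⟨b0, hb0⟩ := qExistsBetween h L R hLR
  have hb0S : b0 ∈ S := ⟨hb0.1, hb0.2⟩
  let f : ℕ → {b // b ∈ S} := fun n => Nat.rec ⟨b0, hb0S⟩
    (fun _ p => ⟨Classical.choose (step p.1 p.2), (Classical.choose_spec (step p.1 p.2)).1⟩) n
  have hdesc : ∀ n, r (f (n+1)).1 (f n).1 := by
    intro n
    exact (Classical.choose_spec (step (f n).1 (f n).2)).2
  have hlt : ∀ m n, m < n → r (f n).1 (f m).1 := by
    intro m n hmn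
    induction n with
    | zero => omega
    | succ k ih =>
      rcases Nat.lt_succ_iff_lt_or_eq.1 hmn with hc | rfl
      · exact qTrans h (hdesc k) (ih hc)
      · exact hdesc m
  have hinj : Function.Injective (fun n => (f n).1) := by
    intro m n hmn
    have hmn' : (f m).1 = (f n).1 := hmn
    by_contra hne
    rcases Nat.lt_or_ge m n with hc | hc
    · have := hlt m n hc; rw [hmn'] at this; exact qIrrefl h _ this
    · have hc' : n < m := by omega
      have := hlt n m hc'; rw [hmn'] at this; exact qIrrefl h _ this
  exact Set.infinite_of_injective_forall_mem hinj (fun n => (f n).2)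

end order

section piso

open Equiv

variable {r₁ r₂ : Ω → Ω → Prop}

/-- `q` is a finite partial isomorphism from `(Ω, r₁)` to `(Ω, r₂)`. -/
def PIso (r₁ r₂ : Ω → Ω → Prop) (q : Finset (Ω × Ω)) : Prop :=
  ∀ p ∈ q, ∀ p' ∈ q, (p.1 = p'.1 ↔ p.2 = p'.2) ∧ (r₁ p.1 p'.1 ↔ r₂ p.2 p'.2)

lemma PIso.subset {q q' : Finset (Ω × Ω)} (h : PIso r₁ r₂ q') (hs : q ⊆ q') :
    PIso r₁ r₂ q := fun p hp p' hp' => h p (hs hp) p' (hs hp')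

lemma piso_flip {q : Finset (Ω × Ω)} (h : PIso r₁ r₂ q) :
    PIso r₂ r₁ (q.image Prod.swap) := by
  classical
  intro p hp p' hp'
  obtain ⟨u, hu, rfl⟩ := Finset.mem_image.1 hp
  obtain ⟨u', hu', rfl⟩ := Finset.mem_image.1 hp'
  obtain ⟨h1, h2⟩ := h u hu u' hu'
  exact ⟨h1.symm, h2.symm⟩

/-- extension on the domain side: infinitely many legal images -/
lemma piso_extend_dom [Infinite Ω] (h₁ : QOrder r₁) (h₂ : QOrder r₂)
    {q : Finset (Ω × Ω)} (hq : PIso r₁ r₂ q) (x : Ω) (hx : ∀ p ∈ q, p.1 ≠ x) :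
    {d | PIso r₁ r₂ (insert (x, d) q)}.Infinite := by
  classical
  set L : Finset Ω := (q.filter (fun p => r₁ p.1 x)).image Prod.snd with hL
  set R : Finset Ω := (q.filter (fun p => r₁ x p.1)).image Prod.snd with hR
  have hLR : ∀ l ∈ L, ∀ u ∈ R, r₂ l u := by
    intro l hl u hu
    obtain ⟨p, hp, rfl⟩ := Finset.mem_image.1 hl
    obtain ⟨p', hp', rfl⟩ := Finset.mem_image.1 hu
    have h1 := (Finset.mem_filter.1 hp).2
    have h2 := (Finset.mem_filter.1 hp').2
    exact ((hq p (Finset.mem_filter.1 hp).1 p' (Finset.mem_filter.1 hp').1).2).1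
      (qTrans h₁ h1 h2)
  refine (qInfiniteBetween h₂ L R hLR).mono ?_
  intro b hb
  -- b is between; show insert is a PIso
  have key : ∀ p ∈ q, (x = p.1 ↔ b = p.2) ∧ (r₁ x p.1 ↔ r₂ b p.2) := by
    intro p hp
    have hxp : x ≠ p.1 := fun hc => hx p hp hc.symm
    have hbp : b ≠ p.2 := by
      intro hc
      rcases qTrichot h₁ x p.1 with hc1 | hc1 | hc1
      · have : p.2 ∈ R := Finset.mem_image.2 ⟨p, Finset.mem_filter.2 ⟨hp, hc1⟩, rfl⟩
        exact qIrrefl h₂ b (hc ▸ hb.2 p.2 this)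
      · exact hxp hc1
      · have : p.2 ∈ L := Finset.mem_image.2 ⟨p, Finset.mem_filter.2 ⟨hp, hc1⟩, rfl⟩
        exact qIrrefl h₂ b (hc ▸ hb.1 p.2 this)
    refine ⟨⟨fun hc => absurd hc hxp, fun hc => absurd hc hbp⟩, ?_, ?_⟩
    · intro hc1
      exact hb.2 p.2 (Finset.mem_image.2 ⟨p, Finset.mem_filter.2 ⟨hp, hc1⟩, rfl⟩)
    · intro hc2
      rcases qTrichot h₁ x p.1 with hc1 | hc1 | hc1
      · exact hc1
      · exact absurd hc1 hxp
      · have : p.2 ∈ L := Finset.mem_image.2 ⟨p, Finset.mem_filter.2 ⟨hp, hc1⟩, rfl⟩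
        exact absurd (qTrans h₂ (hb.1 p.2 this) hc2) (qIrrefl h₂ p.2)
  have key' : ∀ p ∈ q, (p.1 = x ↔ p.2 = b) ∧ (r₁ p.1 x ↔ r₂ p.2 b) := by
    intro p hp
    obtain ⟨k1, k2⟩ := key p hp
    refine ⟨⟨fun hc => (k1.1 hc.symm).symm, fun hc => (k1.2 hc.symm).symm⟩, ?_, ?_⟩
    · intro hc
      rcases qTrichot h₂ p.2 b with hc1 | hc1 | hc1
      · exact hc1
      · exfalso
        have : x = p.1 := k1.2 hc1.symm
        exact qIrrefl h₁ x (this ▸ hc)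
      · exact absurd (k2.2 hc1) (qAsymm h₁ hc)
    · intro hc
      rcases qTrichot h₁ p.1 x with hc1 | hc1 | hc1
      · exact hc1
      · exfalso
        have : b = p.2 := k1.1 hc1.symm
        rw [this] at hc
        exact qIrrefl h₂ p.2 hc
      · exact absurd hc (qAsymm h₂ (k2.1 hc1))
  intro p hp p' hp'
  rcases Finset.mem_insert.1 hp with rfl | hp <;>
    rcases Finset.mem_insert.1 hp' with h' | hp'
  · rw [h']
    exact ⟨by simp, ⟨fun hc => absurd hc (qIrrefl h₁ _), fun hc => absurd hc (qIrrefl h₂ _)⟩⟩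
  · exact key p' hp'
  · rw [h']
    exact key' p hp
  · exact hq p hp p' hp'

lemma piso_extend_ran [Infinite Ω] (h₁ : QOrder r₁) (h₂ : QOrder r₂)
    {q : Finset (Ω × Ω)} (hq : PIso r₁ r₂ q) (y : Ω) (hy : ∀ p ∈ q, p.2 ≠ y) :
    {c | PIso r₁ r₂ (insert (c, y) q)}.Infinite := by
  classical
  have h := piso_extend_dom h₂ h₁ (piso_flip hq) y (by
    intro p hp
    obtain ⟨u, hu, rfl⟩ := Finset.mem_image.1 hp
    exact hy u hu)
  refine h.mono ?_
  intro c hc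
  have : PIso r₂ r₁ (insert (y, c) (q.image Prod.swap)) := hc
  have h2 := piso_flip this
  refine PIso.subset (r₁ := r₁) (r₂ := r₂) (q' := (insert (y, c) (q.image Prod.swap)).image Prod.swap) h2 ?_
  intro p hp
  rcases Finset.mem_insert.1 hp with rfl | hp
  · exact Finset.mem_image.2 ⟨(y, c), Finset.mem_insert_self _ _, rfl⟩
  · exact Finset.mem_image.2 ⟨p.swap, Finset.mem_insert_of_mem
      (Finset.mem_image.2 ⟨p, hp, rfl⟩), by simp⟩

end piso

section words

open Equiv

/-- a letter is either a fixed permutation or an application of the generic `g` (`true`)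
or its inverse (`false`). -/
abbrev Letter (Ω : Type) := Equiv.Perm Ω ⊕ Bool

abbrev Word (Ω : Type) := List (Letter Ω)

def applyL (g : Equiv.Perm Ω) : Letter Ω → Ω → Ω
  | Sum.inl u => u
  | Sum.inr true => g
  | Sum.inr false => g.symm

/-- evaluation of a word under a total permutation, first letter applied first -/
def wEval (g : Equiv.Perm Ω) (w : Word Ω) (a : Ω) : Ω :=
  w.foldl (fun x l => applyL g l x) a

lemma wEval_nil (g : Equiv.Perm Ω) (a : Ω) : wEval g [] a = a := rfl

lemma wEval_cons (g : Equiv.Perm Ω) (l : Letter Ω) (w : Word Ω) (a : Ω) :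
    wEval g (l :: w) a = wEval g w (applyL g l a) := rfl

lemma wEval_append (g : Equiv.Perm Ω) (w₁ w₂ : Word Ω) (a : Ω) :
    wEval g (w₁ ++ w₂) a = wEval g w₂ (wEval g w₁ a) := by
  unfold wEval
  rw [List.foldl_append]

/-- partial evaluation of a word along a finite partial map -/
def pEval (q : Finset (Ω × Ω)) : Word Ω → Ω → Ω → Prop
  | [], a, v => v = a
  | (Sum.inl u) :: w, a, v => pEval q w (u a) v
  | (Sum.inr true) :: w, a, v => ∃ b, (a, b) ∈ q ∧ pEval q w b v
  | (Sum.inr false) :: w, a, v => ∃ b, (b, a) ∈ q ∧ pEval q w b v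

lemma pEval_mono {q q' : Finset (Ω × Ω)} (hqq : q ⊆ q') :
    ∀ (w : Word Ω) (a v : Ω), pEval q w a v → pEval q' w a v := by
  intro w
  induction w with
  | nil => intro a v h; exact h
  | cons l w ih =>
    intro a v h
    match l with
    | Sum.inl u => exact ih _ _ h
    | Sum.inr true =>
      obtain ⟨b, hb, h⟩ := h
      exact ⟨b, hqq hb, ih _ _ h⟩
    | Sum.inr false =>
      obtain ⟨b, hb, h⟩ := h
      exact ⟨b, hqq hb, ih _ _ h⟩

/-- a decided partial evaluation agrees with the evaluation under any total permutation
extending the partial map -/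
lemma pEval_agree {q : Finset (Ω × Ω)} {g : Equiv.Perm Ω}
    (hg : ∀ p ∈ q, g p.1 = p.2) :
    ∀ (w : Word Ω) (a v : Ω), pEval q w a v → wEval g w a = v := by
  intro w
  induction w with
  | nil => intro a v h; rw [wEval_nil]; exact h.symm
  | cons l w ih =>
    intro a v h
    match l with
    | Sum.inl u => exact ih _ _ h
    | Sum.inr true =>
      obtain ⟨b, hb, h⟩ := h
      have : g a = b := hg _ hb
      rw [wEval_cons]
      simpa [applyL, this] using ih _ _ h
    | Sum.inr false =>
      obtain ⟨b, hb, h⟩ := h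
      have : g b = a := hg _ hb
      rw [wEval_cons]
      have hb' : g.symm a = b := by rw [← this]; simp
      simpa [applyL, hb'] using ih _ _ h

lemma word_of_list {H : Subgroup (Equiv.Perm Ω)} {g : Equiv.Perm Ω} :
    ∀ l : List (Equiv.Perm Ω),
      (∀ y ∈ l, y ∈ ((↑H ∪ {g} : Set (Equiv.Perm Ω)) ∪ (↑H ∪ {g} : Set (Equiv.Perm Ω))⁻¹)) →
      ∃ w : Word Ω, (∀ u : Equiv.Perm Ω, Sum.inl u ∈ w → u ∈ H) ∧
        ∀ a, l.prod a = wEval g w a := by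
  intro l
  induction l with
  | nil =>
    intro _
    exact ⟨[], by simp, fun a => by simp [wEval_nil]⟩
  | cons y t ih =>
    intro hl
    obtain ⟨w, hw1, hw2⟩ := ih (fun z hz => hl z (List.mem_cons_of_mem y hz))
    have hy := hl y (List.mem_cons_self)
    have hyl : ∃ ly : Letter Ω, (∀ u : Equiv.Perm Ω, ly = Sum.inl u → u ∈ H) ∧
        ∀ a, applyL g ly a = y a := by
      rcases hy with hy | hy
      · rcases hy with hy | hy
        · exact ⟨Sum.inl y, fun u hu => by cases hu; exact hy, fun a => rfl⟩
        · refine ⟨Sum.inr true, by simp, ?_⟩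
          simp only [Set.mem_singleton_iff] at hy
          subst hy; intro a; rfl
      · rw [Set.mem_inv] at hy
        rcases hy with hy | hy
        · have hyH : y⁻¹ ∈ H := hy
          exact ⟨Sum.inl y, fun u hu => by cases hu; simpa using H.inv_mem hyH, fun a => rfl⟩
        · simp only [Set.mem_singleton_iff] at hy
          have hg : y = g⁻¹ := by rw [← hy]; simp
          refine ⟨Sum.inr false, by simp, ?_⟩
          subst hg; intro a; rfl
    obtain ⟨ly, hly1, hly2⟩ := hyl
    refine ⟨w ++ [ly], ?_, ?_⟩
    · intro u hu
      rcases List.mem_append.1 hu with hu | hu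
      · exact hw1 u hu
      · simp only [List.mem_singleton] at hu
        exact hly1 u hu.symm
    · intro a
      rw [wEval_append, ← hw2]
      show (y * t.prod) a = wEval g [ly] (t.prod a)
      rw [Equiv.Perm.mul_apply]
      show y (t.prod a) = applyL g ly (t.prod a)
      rw [hly2]

/-- every member of the subgroup generated by `H ∪ {g}` is the evaluation of some word
with permutation letters in `H`. -/
lemma exists_word {H : Subgroup (Equiv.Perm Ω)} {g π : Equiv.Perm Ω}
    (hπ : π ∈ Subgroup.closure (↑H ∪ {g})) :
    ∃ w : Word Ω, (∀ u : Equiv.Perm Ω, Sum.inl u ∈ w → u ∈ H) ∧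
      ∀ a, π a = wEval g w a := by
  have h2 : π ∈ Submonoid.closure ((↑H ∪ {g}) ∪ (↑H ∪ {g})⁻¹) := by
    rw [← Subgroup.closure_toSubmonoid]
    exact hπ
  obtain ⟨l, hl, hprod⟩ := Submonoid.exists_list_of_mem_closure h2
  obtain ⟨w, hw1, hw2⟩ := word_of_list l hl
  exact ⟨w, hw1, fun a => by rw [← hprod]; exact hw2 a⟩

end words

section engine

open Equiv

variable [Infinite Ω]

/-- all products of at most `n` letters from `Λ` -/
noncomputable def Prods (Λ : Finset (Equiv.Perm Ω)) : ℕ → Finset (Equiv.Perm Ω)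
  | 0 => {1}
  | n+1 => Prods Λ n ∪ Λ.biUnion (fun u => (Prods Λ n).image (fun π => π * u))

lemma one_mem_Prods (Λ : Finset (Equiv.Perm Ω)) (n : ℕ) : 1 ∈ Prods Λ n := by
  induction n with
  | zero => simp [Prods]
  | succ n ih => exact Finset.mem_union_left _ ih

lemma Prods_mono {Λ : Finset (Equiv.Perm Ω)} {k m : ℕ} (h : k ≤ m) :
    Prods Λ k ⊆ Prods Λ m := by
  induction m with
  | zero => simpa [Nat.le_zero.1 h]
  | succ m ih =>
    rcases Nat.le_succ_iff_eq_or_le.1 h with rfl | h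
    · exact fun _ h => h
    · exact fun π hπ => Finset.mem_union_left _ (ih h hπ)

lemma mul_mem_Prods {Λ : Finset (Equiv.Perm Ω)} {k : ℕ} {π u : Equiv.Perm Ω}
    (hπ : π ∈ Prods Λ k) (hu : u ∈ Λ) : π * u ∈ Prods Λ (k+1) :=
  Finset.mem_union_right _ (Finset.mem_biUnion.2 ⟨u, hu, Finset.mem_image.2 ⟨π, hπ, rfl⟩⟩)

lemma Prods_subset_subgroup {Λ : Finset (Equiv.Perm Ω)} {H : Subgroup (Equiv.Perm Ω)}
    (hΛ : ↑Λ ⊆ (H : Set (Equiv.Perm Ω))) (n : ℕ) :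
    ↑(Prods Λ n) ⊆ (H : Set (Equiv.Perm Ω)) := by
  induction n with
  | zero => intro π hπ; simp only [Prods, Finset.coe_singleton, Set.mem_singleton_iff] at hπ
            subst hπ; exact H.one_mem
  | succ n ih =>
    intro π hπ
    rcases Finset.mem_union.1 hπ with hπ | hπ
    · exact ih hπ
    · obtain ⟨u, hu, hπ⟩ := Finset.mem_biUnion.1 hπ
      obtain ⟨π', hπ', rfl⟩ := Finset.mem_image.1 hπ
      exact H.mul_mem (ih hπ') (hΛ hu)

/-- a point is `k`-clean if all its translates by short products avoid `f₀ a` and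
the fixed region of `q₀` -/
def Clean (Λ : Finset (Equiv.Perm Ω)) (f₀ : Equiv.Perm Ω) (q₀ : Finset (Ω × Ω))
    (a : Ω) (k : ℕ) (x : Ω) : Prop :=
  ∀ π ∈ Prods Λ k, π x ≠ f₀ a ∧ ∀ p ∈ q₀, π x ≠ p.1 ∧ π x ≠ p.2

lemma Clean_mono {Λ : Finset (Equiv.Perm Ω)} {f₀ : Equiv.Perm Ω} {q₀ : Finset (Ω × Ω)}
    {a : Ω} {k m : ℕ} (hkm : k ≤ m) {x : Ω} (h : Clean Λ f₀ q₀ a m x) :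
    Clean Λ f₀ q₀ a k x :=
  fun π hπ => h π (Prods_mono hkm hπ)

lemma Clean_letter {Λ : Finset (Equiv.Perm Ω)} {f₀ : Equiv.Perm Ω} {q₀ : Finset (Ω × Ω)}
    {a : Ω} {k : ℕ} {x : Ω} {u : Equiv.Perm Ω} (hu : u ∈ Λ)
    (h : Clean Λ f₀ q₀ a (k+1) x) : Clean Λ f₀ q₀ a k (u x) := by
  intro π hπ
  have := h (π * u) (mul_mem_Prods hπ hu)
  simpa [Equiv.Perm.mul_apply] using this

lemma Clean_self {Λ : Finset (Equiv.Perm Ω)} {f₀ : Equiv.Perm Ω} {q₀ : Finset (Ω × Ω)}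
    {a : Ω} {k : ℕ} {x : Ω} (h : Clean Λ f₀ q₀ a k x) :
    x ≠ f₀ a ∧ ∀ p ∈ q₀, x ≠ p.1 ∧ x ≠ p.2 := by
  have := h 1 (one_mem_Prods Λ k)
  simpa using this

lemma unclean_finite (Λ : Finset (Equiv.Perm Ω)) (f₀ : Equiv.Perm Ω) (q₀ : Finset (Ω × Ω))
    (a : Ω) (k : ℕ) : {x | ¬ Clean Λ f₀ q₀ a k x}.Finite := by
  classical
  have hsub : {x | ¬ Clean Λ f₀ q₀ a k x} ⊆
      ⋃ π ∈ (Prods Λ k : Finset (Equiv.Perm Ω)),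
        (fun x => π x) ⁻¹' (insert (f₀ a) (↑(q₀.image Prod.fst ∪ q₀.image Prod.snd))) := by
    intro x hx
    simp only [Clean, not_forall] at hx
    obtain ⟨π, hπ, hbad⟩ := hx
    refine Set.mem_biUnion hπ ?_
    simp only [Set.mem_preimage, Set.mem_insert_iff]
    by_contra hc
    push_neg at hc
    refine hbad ⟨hc.1, ?_⟩
    intro p hp
    constructor
    · intro he
      exact hc.2 (by
        refine Finset.mem_coe.2 (Finset.mem_union_left _ ?_)
        exact Finset.mem_image.2 ⟨p, hp, he.symm⟩)
    · intro he
      exact hc.2 (by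
        refine Finset.mem_coe.2 (Finset.mem_union_right _ ?_)
        exact Finset.mem_image.2 ⟨p, hp, he.symm⟩)
  refine Set.Finite.subset ?_ hsub
  refine Set.Finite.biUnion (Finset.finite_toSet _) ?_
  intro π _
  refine Set.Finite.preimage ?_ ?_
  · exact Set.injOn_of_injective (Equiv.injective π)
  · exact Set.Finite.insert _ (Finset.finite_toSet _)

/-- `q` is a good extension of `q₀`: a partial iso all of whose new pairs are clean -/
def GoodExt (r₁ r₂ : Ω → Ω → Prop) (Λ : Finset (Equiv.Perm Ω)) (f₀ : Equiv.Perm Ω)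
    (q₀ : Finset (Ω × Ω)) (a : Ω) (k : ℕ) (q : Finset (Ω × Ω)) : Prop :=
  q₀ ⊆ q ∧ PIso r₁ r₂ q ∧
    ∀ p ∈ q, p ∉ q₀ → Clean Λ f₀ q₀ a k p.1 ∧ Clean Λ f₀ q₀ a k p.2

lemma GoodExt_mono {r₁ r₂ : Ω → Ω → Prop} {Λ : Finset (Equiv.Perm Ω)} {f₀ : Equiv.Perm Ω}
    {q₀ : Finset (Ω × Ω)} {a : Ω} {k m : ℕ} (hkm : k ≤ m) {q : Finset (Ω × Ω)}
    (h : GoodExt r₁ r₂ Λ f₀ q₀ a m q) : GoodExt r₁ r₂ Λ f₀ q₀ a k q :=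
  ⟨h.1, h.2.1, fun p hp hp0 => ⟨Clean_mono hkm (h.2.2 p hp hp0).1, Clean_mono hkm (h.2.2 p hp hp0).2⟩⟩

/-- The main chain-building lemma: a single word can be decided starting from a clean
point, keeping the extension good. -/
lemma chain {r₁ r₂ : Ω → Ω → Prop} {Λ : Finset (Equiv.Perm Ω)} {f₀ : Equiv.Perm Ω}
    {q₀ : Finset (Ω × Ω)} {a : Ω} (h₁ : QOrder r₁) (h₂ : QOrder r₂) :
    ∀ (w : Word Ω) (R : ℕ) (n : ℕ) (q : Finset (Ω × Ω)) (x : Ω),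
      (∀ u, Sum.inl u ∈ w → u ∈ Λ) → w.length + R ≤ n →
      GoodExt r₁ r₂ Λ f₀ q₀ a n q → Clean Λ f₀ q₀ a n x →
      ∃ q' v, q ⊆ q' ∧ GoodExt r₁ r₂ Λ f₀ q₀ a R q' ∧ Clean Λ f₀ q₀ a R v ∧
        pEval q' w x v := by
  intro w
  induction w with
  | nil =>
    intro R n q x _ hn hG hx
    exact ⟨q, x, Finset.Subset.refl q, GoodExt_mono (by simpa using hn) hG,
      Clean_mono (by simpa using hn) hx, rfl⟩
  | cons l w ih =>
    intro R n q x hw hn hG hx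
    have hn' : w.length + R ≤ n := by simp only [List.length_cons] at hn; omega
    have hn'' : w.length + R + 1 ≤ n := by simp only [List.length_cons] at hn; omega
    match l with
    | Sum.inl u =>
      have hu : u ∈ Λ := hw u (List.mem_cons_self)
      have hx' : Clean Λ f₀ q₀ a (w.length + R) (u x) :=
        Clean_letter hu (Clean_mono hn'' hx)
      obtain ⟨q', v, hsub, hG', hv, hev⟩ := ih R (w.length + R) q (u x)
        (fun u' hu' => hw u' (List.mem_cons_of_mem _ hu')) le_rfl
        (GoodExt_mono hn' hG) hx'
      exact ⟨q', v, hsub, hG', hv, hev⟩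
    | Sum.inr true =>
      by_cases hdom : ∃ b, (x, b) ∈ q
      · obtain ⟨b, hb⟩ := hdom
        have hnotq0 : (x, b) ∉ q₀ := by
          intro hc
          exact ((Clean_self hx).2 (x, b) hc).1 rfl
        have hbclean : Clean Λ f₀ q₀ a (w.length + R) b :=
          Clean_mono hn' ((hG.2.2 (x, b) hb hnotq0).2)
        obtain ⟨q', v, hsub, hG', hv, hev⟩ := ih R (w.length + R) q b
          (fun u' hu' => hw u' (List.mem_cons_of_mem _ hu')) le_rfl
          (GoodExt_mono hn' hG) hbclean
        exact ⟨q', v, hsub, hG', hv, ⟨b, hsub hb, hev⟩⟩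
      · have hxd : ∀ p ∈ q, p.1 ≠ x := by
          intro p hp hc
          exact hdom ⟨p.2, by rwa [← hc, Prod.mk.eta]⟩
        have hinf := piso_extend_dom h₁ h₂ hG.2.1 x hxd
        have hfin := unclean_finite Λ f₀ q₀ a (w.length + R)
        obtain ⟨d, hd1, hd2⟩ := (hinf.diff hfin).nonempty
        have hdclean : Clean Λ f₀ q₀ a (w.length + R) d := by
          simpa using hd2
        set q'' := insert (x, d) q with hq''
        have hxq0 : (x, d) ∉ q₀ := by
          intro hc
          exact ((Clean_self hx).2 (x, d) hc).1 rfl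
        have hG'' : GoodExt r₁ r₂ Λ f₀ q₀ a (w.length + R) q'' := by
          refine ⟨Finset.Subset.trans hG.1 (Finset.subset_insert _ _), hd1, ?_⟩
          intro p hp hp0
          rcases Finset.mem_insert.1 hp with rfl | hp
          · exact ⟨Clean_mono hn' hx, hdclean⟩
          · exact ⟨Clean_mono hn' (hG.2.2 p hp hp0).1, Clean_mono hn' (hG.2.2 p hp hp0).2⟩
        obtain ⟨q', v, hsub, hG', hv, hev⟩ := ih R (w.length + R) q'' d
          (fun u' hu' => hw u' (List.mem_cons_of_mem _ hu')) le_rfl hG'' hdclean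
        refine ⟨q', v, Finset.Subset.trans (Finset.subset_insert _ _) hsub, hG', hv, ?_⟩
        exact ⟨d, hsub (Finset.mem_insert_self _ _), hev⟩
    | Sum.inr false =>
      by_cases hran : ∃ b, (b, x) ∈ q
      · obtain ⟨b, hb⟩ := hran
        have hnotq0 : (b, x) ∉ q₀ := by
          intro hc
          exact ((Clean_self hx).2 (b, x) hc).2 rfl
        have hbclean : Clean Λ f₀ q₀ a (w.length + R) b :=
          Clean_mono hn' ((hG.2.2 (b, x) hb hnotq0).1)
        obtain ⟨q', v, hsub, hG', hv, hev⟩ := ih R (w.length + R) q b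
          (fun u' hu' => hw u' (List.mem_cons_of_mem _ hu')) le_rfl
          (GoodExt_mono hn' hG) hbclean
        exact ⟨q', v, hsub, hG', hv, ⟨b, hsub hb, hev⟩⟩
      · have hxr : ∀ p ∈ q, p.2 ≠ x := by
          intro p hp hc
          exact hran ⟨p.1, by rwa [← hc, Prod.mk.eta]⟩
        have hinf := piso_extend_ran h₁ h₂ hG.2.1 x hxr
        have hfin := unclean_finite Λ f₀ q₀ a (w.length + R)
        obtain ⟨d, hd1, hd2⟩ := (hinf.diff hfin).nonempty
        have hdclean : Clean Λ f₀ q₀ a (w.length + R) d := by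
          simpa using hd2
        set q'' := insert (d, x) q with hq''
        have hxq0 : (d, x) ∉ q₀ := by
          intro hc
          exact ((Clean_self hx).2 (d, x) hc).2 rfl
        have hG'' : GoodExt r₁ r₂ Λ f₀ q₀ a (w.length + R) q'' := by
          refine ⟨Finset.Subset.trans hG.1 (Finset.subset_insert _ _), hd1, ?_⟩
          intro p hp hp0
          rcases Finset.mem_insert.1 hp with rfl | hp
          · exact ⟨hdclean, Clean_mono hn' hx⟩
          · exact ⟨Clean_mono hn' (hG.2.2 p hp hp0).1, Clean_mono hn' (hG.2.2 p hp hp0).2⟩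
        obtain ⟨q', v, hsub, hG', hv, hev⟩ := ih R (w.length + R) q'' d
          (fun u' hu' => hw u' (List.mem_cons_of_mem _ hu')) le_rfl hG'' hdclean
        refine ⟨q', v, Finset.Subset.trans (Finset.subset_insert _ _) hsub, hG', hv, ?_⟩
        exact ⟨d, hsub (Finset.mem_insert_self _ _), hev⟩

/-- several words can be decided at the same clean starting point -/
lemma multiword {r₁ r₂ : Ω → Ω → Prop} {Λ : Finset (Equiv.Perm Ω)} {f₀ : Equiv.Perm Ω}
    {q₀ : Finset (Ω × Ω)} {a : Ω} (h₁ : QOrder r₁) (h₂ : QOrder r₂) :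
    ∀ (ws : List (Word Ω)) (q : Finset (Ω × Ω)) (x : Ω),
      (∀ w ∈ ws, ∀ u, Sum.inl u ∈ w → u ∈ Λ) →
      GoodExt r₁ r₂ Λ f₀ q₀ a ((ws.map List.length).sum) q →
      Clean Λ f₀ q₀ a ((ws.map List.length).sum) x →
      ∃ q', q ⊆ q' ∧ PIso r₁ r₂ q' ∧
        ∀ w ∈ ws, ∃ v, pEval q' w x v ∧ v ≠ f₀ a := by
  intro ws
  induction ws with
  | nil =>
    intro q x _ hG _
    exact ⟨q, Finset.Subset.refl q, hG.2.1, by simp⟩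
  | cons w ws ih =>
    intro q x hws hG hx
    set R := (ws.map List.length).sum with hR
    have hlen : (( (w :: ws).map List.length).sum) = w.length + R := by
      simp [hR]
    rw [hlen] at hG hx
    obtain ⟨q₁, v, hsub₁, hG₁, hv, hev⟩ := chain h₁ h₂ w R (w.length + R) q x
      (fun u hu => hws w (List.mem_cons_self) u hu) le_rfl hG hx
    obtain ⟨q', hsub₂, hPI, hall⟩ := ih q₁ x
      (fun w' hw' u hu => hws w' (List.mem_cons_of_mem _ hw') u hu) hG₁
      (Clean_mono (by omega) hx)
    refine ⟨q', Finset.Subset.trans hsub₁ hsub₂, hPI, ?_⟩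
    intro w' hw'
    rcases List.mem_cons.1 hw' with rfl | hw'
    · exact ⟨v, pEval_mono hsub₂ _ _ _ hev, (Clean_self hv).1⟩
    · exact hall w' hw'

end engine

section step

open Equiv Cardinal

variable [Countable Ω] [Infinite Ω]

/-- the invariant: `f₀` differs from every finite subset of `H` simultaneously at
infinitely many points -/
def Inv (f₀ : Equiv.Perm Ω) (H : Subgroup (Equiv.Perm Ω)) : Prop :=
  ∀ T : Finset (Equiv.Perm Ω), ↑T ⊆ (H : Set (Equiv.Perm Ω)) →
    {a | ∀ π ∈ T, π a ≠ f₀ a}.Infinite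

lemma infinite_of_forall_finset {s : Set Ω} (h : ∀ F : Finset Ω, ∃ a, a ∉ F ∧ a ∈ s) :
    s.Infinite := by
  by_contra hinf
  rw [Set.not_infinite] at hinf
  have hfin := hinf
  obtain ⟨a, ha1, ha2⟩ := h hfin.toFinset
  exact ha1 (hfin.mem_toFinset.2 ha2)

/-- word with subgroup-letters -/
def toWord (H : Subgroup (Equiv.Perm Ω)) (w : List (↥H ⊕ Bool)) : Word Ω :=
  w.map (Sum.map (fun u : ↥H => (u : Equiv.Perm Ω)) (id : Bool → Bool))

lemma toWord_letters {H : Subgroup (Equiv.Perm Ω)} {w : List (↥H ⊕ Bool)}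
    {u : Equiv.Perm Ω} (hu : Sum.inl u ∈ toWord H w) : u ∈ H := by
  obtain ⟨l, _, hl2⟩ := List.mem_map.1 hu
  match l with
  | Sum.inl u' =>
    simp only [Sum.map_inl, Sum.inl.injEq] at hl2
    rw [← hl2]
    exact u'.2
  | Sum.inr b => simp only [Sum.map_inr] at hl2; exact absurd hl2 (by simp)

def toSub (H : Subgroup (Equiv.Perm Ω)) :
    ∀ (w : Word Ω), (∀ u, Sum.inl u ∈ w → u ∈ H) → List (↥H ⊕ Bool)
  | [], _ => []
  | (Sum.inl u) :: t, h =>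
      Sum.inl ⟨u, h u (List.mem_cons_self)⟩ ::
        toSub H t (fun u hu => h u (List.mem_cons_of_mem _ hu))
  | (Sum.inr b) :: t, h => Sum.inr b :: toSub H t (fun u hu => h u (List.mem_cons_of_mem _ hu))

lemma toWord_toSub {H : Subgroup (Equiv.Perm Ω)} :
    ∀ (w : Word Ω) (h : ∀ u, Sum.inl u ∈ w → u ∈ H), toWord H (toSub H w h) = w := by
  intro w
  induction w with
  | nil => intro h; rfl
  | cons l t ih =>
    intro h
    match l with
    | Sum.inl u =>
      show Sum.inl u :: toWord H (toSub H t _) = _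
      rw [ih]
    | Sum.inr b =>
      show Sum.inr b :: toWord H (toSub H t _) = _
      rw [ih]

/-- The key step lemma: given a small subgroup `H` satisfying the invariant, and a task
`(r₁, r₂, p₀)`, there is a permutation `g` inducing an isomorphism from `r₁` to `r₂`,
extending `p₀`, such that the subgroup generated by `H` and `g` still satisfies
the invariant. -/
lemma step (hMA : MASigmaCentered) (f₀ : Equiv.Perm Ω)
    (H : Subgroup (Equiv.Perm Ω)) (hcard : #↥H < continuum) (hInv : Inv f₀ H)
    {r₁ r₂ : Ω → Ω → Prop} (h₁ : QOrder r₁) (h₂ : QOrder r₂)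
    (p₀ : Finset (Ω × Ω)) (hp₀ : PIso r₁ r₂ p₀) :
    ∃ g : Equiv.Perm Ω, (∀ a b, r₂ (g a) (g b) ↔ r₁ a b) ∧ (∀ p ∈ p₀, g p.1 = p.2) ∧
      Inv f₀ (Subgroup.closure ((H : Set (Equiv.Perm Ω)) ∪ {g})) := by
  classical
  -- the forcing notion
  let Cond := {q : Finset (Ω × Ω) // PIso r₁ r₂ q ∧ p₀ ⊆ q}
  letI instPre : Preorder Cond :=
    { le := fun q q' => q.1 ⊆ q'.1
      le_refl := fun q => Finset.Subset.refl q.1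
      le_trans := fun a b c h1 h2 => Finset.Subset.trans h1 h2 }
  have hne : Nonempty Cond := ⟨⟨p₀, hp₀, Finset.Subset.refl _⟩⟩
  have hsc : SigmaCentered Cond := by
    obtain ⟨f, hf⟩ := exists_surjective_nat Cond
    refine ⟨fun n => {f n}, ?_, ?_⟩
    · intro n S hS
      refine ⟨f n, ?_⟩
      intro qq hq
      have : qq = f n := hS hq
      rw [this]
    · ext q
      simp only [Set.mem_iUnion, Set.mem_singleton_iff, Set.mem_univ, iff_true]
      obtain ⟨n, rfl⟩ := hf q
      exact ⟨n, rfl⟩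
  -- the dense sets
  let D1 : Ω → Set Cond := fun x => {q | ∃ b, (x, b) ∈ q.1}
  let D2 : Ω → Set Cond := fun y => {q | ∃ c, (c, y) ∈ q.1}
  let D3 : List (List (↥H ⊕ Bool)) × Finset Ω → Set Cond := fun j =>
    {q | ∃ a, a ∉ j.2 ∧ ∀ w ∈ j.1, ∃ v, pEval q.1 (toWord H w) a v ∧ v ≠ f₀ a}
  let 𝒟 : Set (Set Cond) := Set.range D1 ∪ Set.range D2 ∪ Set.range D3
  -- density
  have hD1dense : ∀ x (q : Cond), ∃ q' ∈ D1 x, q ≤ q' := by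
    intro x q
    by_cases hx : ∃ b, (x, b) ∈ q.1
    · exact ⟨q, hx, le_refl q⟩
    · have hxd : ∀ p ∈ q.1, p.1 ≠ x := by
        intro p hp hc
        exact hx ⟨p.2, by rwa [← hc, Prod.mk.eta]⟩
      obtain ⟨d, hd⟩ := (piso_extend_dom h₁ h₂ q.2.1 x hxd).nonempty
      exact ⟨⟨insert (x, d) q.1, hd, Finset.Subset.trans q.2.2 (Finset.subset_insert _ _)⟩,
        ⟨d, Finset.mem_insert_self _ _⟩, Finset.subset_insert _ _⟩
  have hD2dense : ∀ y (q : Cond), ∃ q' ∈ D2 y, q ≤ q' := by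
    intro y q
    by_cases hy : ∃ c, (c, y) ∈ q.1
    · exact ⟨q, hy, le_refl q⟩
    · have hyr : ∀ p ∈ q.1, p.2 ≠ y := by
        intro p hp hc
        exact hy ⟨p.1, by rwa [← hc, Prod.mk.eta]⟩
      obtain ⟨c, hc⟩ := (piso_extend_ran h₁ h₂ q.2.1 y hyr).nonempty
      exact ⟨⟨insert (c, y) q.1, hc, Finset.Subset.trans q.2.2 (Finset.subset_insert _ _)⟩,
        ⟨c, Finset.mem_insert_self _ _⟩, Finset.subset_insert _ _⟩
  have hD3dense : ∀ j (q : Cond), ∃ q' ∈ D3 j, q ≤ q' := by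
    intro j q
    set ws : List (Word Ω) := j.1.map (toWord H) with hws
    set Λ : Finset (Equiv.Perm Ω) :=
      (j.1.flatten.filterMap
        (Sum.elim (fun u : ↥H => some ((u : Equiv.Perm Ω)))
          (fun _ : Bool => (none : Option (Equiv.Perm Ω))))).toFinset with hΛdef
    have hletters : ∀ w ∈ ws, ∀ u, Sum.inl u ∈ w → u ∈ Λ := by
      intro w hw u hu
      obtain ⟨w', hw', rfl⟩ := List.mem_map.1 hw
      obtain ⟨l, hl, hl2⟩ := List.mem_map.1 hu
      match l with
      | Sum.inl u' =>
        simp only [Sum.map_inl, Sum.inl.injEq] at hl2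
        rw [hΛdef]
        rw [List.mem_toFinset, List.mem_filterMap]
        refine ⟨Sum.inl u', List.mem_flatten.2 ⟨w', hw', hl⟩, ?_⟩
        simp only [Sum.elim_inl, Option.some.injEq]
        exact hl2
      | Sum.inr b => simp only [Sum.map_inr] at hl2; exact absurd hl2 (by simp)
    have hΛH : ↑Λ ⊆ (H : Set (Equiv.Perm Ω)) := by
      intro u hu
      rw [hΛdef] at hu
      simp only [Finset.mem_coe, List.mem_toFinset, List.mem_filterMap] at hu
      obtain ⟨l, _, hl2⟩ := hu
      match l with
      | Sum.inl u' =>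
        simp only [Sum.elim_inl, Option.some.injEq] at hl2
        rw [← hl2]; exact u'.2
      | Sum.inr b => simp at hl2
    set n := (ws.map List.length).sum with hn
    -- choose a clean starting point
    have hAinf := hInv (Prods Λ n) (Prods_subset_subgroup hΛH n)
    have hBfin : (⋃ π ∈ (Prods Λ n : Finset (Equiv.Perm Ω)),
        (fun x => π x) ⁻¹' ↑(q.1.image Prod.fst ∪ q.1.image Prod.snd)).Finite := by
      refine Set.Finite.biUnion (Finset.finite_toSet _) ?_
      intro π _
      exact Set.Finite.preimage (Set.injOn_of_injective (Equiv.injective π))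
        (Finset.finite_toSet _)
    obtain ⟨a, ha⟩ := ((hAinf.diff hBfin).diff (Finset.finite_toSet j.2)).nonempty
    obtain ⟨⟨haA, haB⟩, haF⟩ := ha
    have haclean : Clean Λ f₀ q.1 a n a := by
      intro π hπ
      refine ⟨haA π hπ, ?_⟩
      intro p hp
      constructor
      · intro hc
        exact haB (Set.mem_biUnion hπ (by
          simp only [Set.mem_preimage, Finset.coe_union, Set.mem_union, Finset.mem_coe]
          exact Or.inl (by rw [hc]; exact Finset.mem_image.2 ⟨p, hp, rfl⟩)))
      · intro hc
        exact haB (Set.mem_biUnion hπ (by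
          simp only [Set.mem_preimage, Finset.coe_union, Set.mem_union, Finset.mem_coe]
          exact Or.inr (by rw [hc]; exact Finset.mem_image.2 ⟨p, hp, rfl⟩)))
    have hGE : GoodExt r₁ r₂ Λ f₀ q.1 a n q.1 :=
      ⟨Finset.Subset.refl _, q.2.1, fun p hp hp0 => absurd hp hp0⟩
    obtain ⟨q', hsub, hPI, hall⟩ := multiword h₁ h₂ ws q.1 a hletters hGE haclean
    refine ⟨⟨q', hPI, Finset.Subset.trans q.2.2 hsub⟩, ?_, hsub⟩
    refine ⟨a, haF, ?_⟩
    intro w hw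
    exact hall (toWord H w) (List.mem_map.2 ⟨w, hw, rfl⟩)
  have hDdense : ∀ D ∈ 𝒟, (∀ p ∈ D, ∀ q, p ≤ q → q ∈ D) ∧ (∀ p, ∃ q ∈ D, p ≤ q) := by
    intro D hD
    rcases hD with (hD | hD) | hD
    · obtain ⟨x, rfl⟩ := hD
      refine ⟨?_, fun p => hD1dense x p⟩
      rintro p ⟨b, hb⟩ q hpq
      exact ⟨b, hpq hb⟩
    · obtain ⟨y, rfl⟩ := hD
      refine ⟨?_, fun p => hD2dense y p⟩
      rintro p ⟨c, hc⟩ q hpq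
      exact ⟨c, hpq hc⟩
    · obtain ⟨j, rfl⟩ := hD
      refine ⟨?_, fun p => hD3dense j p⟩
      rintro p ⟨a, ha, hav⟩ q hpq
      refine ⟨a, ha, ?_⟩
      intro w hw
      obtain ⟨v, hv1, hv2⟩ := hav w hw
      exact ⟨v, pEval_mono hpq _ _ _ hv1, hv2⟩
  -- cardinality of the family
  have hcard𝒟 : #↥𝒟 < continuum := by
    have h1 : #↥(Set.range D1) ≤ ℵ₀ := le_trans mk_range_le (mk_le_aleph0)
    have h2 : #↥(Set.range D2) ≤ ℵ₀ := le_trans mk_range_le (mk_le_aleph0)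
    have hJ : #(List (List (↥H ⊕ Bool)) × Finset Ω) < continuum := by
      have hHB : #(↥H ⊕ Bool) < continuum := by
        rw [mk_sum]
        simp only [Cardinal.lift_id]
        exact add_lt_of_lt aleph0_le_continuum hcard
          (lt_trans (Cardinal.lt_aleph0_of_finite Bool) aleph0_lt_continuum)
      have hL1 : #(List (↥H ⊕ Bool)) < continuum :=
        lt_of_le_of_lt (mk_list_le_max _) (max_lt aleph0_lt_continuum hHB)
      have hL2 : #(List (List (↥H ⊕ Bool))) < continuum :=
        lt_of_le_of_lt (mk_list_le_max _) (max_lt aleph0_lt_continuum hL1)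
      rw [Cardinal.mk_prod]
      simp only [Cardinal.lift_id]
      exact mul_lt_of_lt aleph0_le_continuum hL2
        (lt_of_le_of_lt mk_le_aleph0 aleph0_lt_continuum)
    have h3 : #↥(Set.range D3) < continuum := lt_of_le_of_lt mk_range_le hJ
    have hsplit : #↥𝒟 ≤ #↥(Set.range D1 ∪ Set.range D2) + #↥(Set.range D3) :=
      mk_union_le _ _
    have hsplit2 : #↥(Set.range D1 ∪ Set.range D2) ≤ #↥(Set.range D1) + #↥(Set.range D2) :=
      mk_union_le _ _
    refine lt_of_le_of_lt hsplit (add_lt_of_lt aleph0_le_continuum ?_ h3)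
    refine lt_of_le_of_lt hsplit2 (add_lt_of_lt aleph0_le_continuum ?_ ?_)
    · exact lt_of_le_of_lt h1 aleph0_lt_continuum
    · exact lt_of_le_of_lt h2 aleph0_lt_continuum
  -- apply MA
  obtain ⟨Q, hQne, hQdir, hQdown, hQmeet⟩ := hMA Cond hne hsc 𝒟 hDdense hcard𝒟
  -- extract the generic permutation
  let R : Ω → Ω → Prop := fun x y => ∃ q ∈ Q, (x, y) ∈ q.1
  have hfun : ∀ {x y y'}, R x y → R x y' → y = y' := by
    rintro x y y' ⟨q, hq, hxy⟩ ⟨q', hq', hxy'⟩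
    obtain ⟨q'', hq'', h1, h2⟩ := hQdir q hq q' hq'
    exact ((q''.2.1 (x, y) (h1 hxy) (x, y') (h2 hxy')).1).1 rfl
  have hinj : ∀ {x x' y}, R x y → R x' y → x = x' := by
    rintro x x' y ⟨q, hq, hxy⟩ ⟨q', hq', hxy'⟩
    obtain ⟨q'', hq'', h1, h2⟩ := hQdir q hq q' hq'
    exact ((q''.2.1 (x, y) (h1 hxy) (x', y) (h2 hxy')).1).2 rfl
  have htot : ∀ x, ∃ y, R x y := by
    intro x
    obtain ⟨q, hq1, hq2⟩ := hQmeet (D1 x) (Or.inl (Or.inl ⟨x, rfl⟩))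
    obtain ⟨b, hb⟩ := hq2
    exact ⟨b, q, hq1, hb⟩
  have hsur : ∀ y, ∃ x, R x y := by
    intro y
    obtain ⟨q, hq1, hq2⟩ := hQmeet (D2 y) (Or.inl (Or.inr ⟨y, rfl⟩))
    obtain ⟨c, hc⟩ := hq2
    exact ⟨c, q, hq1, hc⟩
  let toF : Ω → Ω := fun x => Classical.choose (htot x)
  have htoF : ∀ x, R x (toF x) := fun x => Classical.choose_spec (htot x)
  let invF : Ω → Ω := fun y => Classical.choose (hsur y)
  have hinvF : ∀ y, R (invF y) y := fun y => Classical.choose_spec (hsur y)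
  let g : Equiv.Perm Ω :=
    ⟨toF, invF, fun x => hinj (hinvF (toF x)) (htoF x), fun y => hfun (htoF (invF y)) (hinvF y)⟩
  have hg : ∀ x y, R x y → g x = y := fun x y h => hfun (htoF x) h
  have hgq : ∀ q ∈ Q, ∀ p ∈ q.1, g p.1 = p.2 := by
    intro q hq p hp
    exact hg p.1 p.2 ⟨q, hq, by rwa [Prod.mk.eta]⟩
  refine ⟨g, ?_, ?_, ?_⟩
  · -- order isomorphism
    intro x y
    obtain ⟨qx, hqx, hx⟩ := htoF x
    obtain ⟨qy, hqy, hy⟩ := htoF y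
    obtain ⟨q, hq, h1, h2⟩ := hQdir qx hqx qy hqy
    have := (q.2.1 (x, toF x) (h1 hx) (y, toF y) (h2 hy)).2
    exact (by exact this.symm : r₂ (toF x) (toF y) ↔ r₁ x y)
  · -- extends p₀
    intro p hp
    obtain ⟨q, hq⟩ := hQne
    exact hgq q hq p (q.2.2 hp)
  · -- the invariant persists
    intro T hT
    -- represent each element of T by a subgroup-word
    have hrep : ∀ π : Equiv.Perm Ω, π ∈ T → ∃ w : List (↥H ⊕ Bool),
        ∀ a, π a = wEval g (toWord H w) a := by
      intro π hπ
      obtain ⟨w, hw1, hw2⟩ := exists_word (hT hπ)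
      exact ⟨toSub H w hw1, fun a => by rw [toWord_toSub]; exact hw2 a⟩
    choose wrep hwrep using hrep
    refine infinite_of_forall_finset ?_
    intro F
    let ws : List (List (↥H ⊕ Bool)) :=
      T.toList.attach.map (fun p => wrep p.1 (Finset.mem_toList.1 p.2))
    obtain ⟨q, hqQ, a, haF, hav⟩ := hQmeet (D3 (ws, F)) (Or.inr ⟨(ws, F), rfl⟩)
    refine ⟨a, haF, ?_⟩
    intro π hπ
    have hwmem : wrep π hπ ∈ ws := by
      refine List.mem_map.2 ⟨⟨π, Finset.mem_toList.2 hπ⟩, ?_, rfl⟩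
      exact List.mem_attach _ _
    obtain ⟨v, hv1, hv2⟩ := hav (wrep π hπ) hwmem
    have := pEval_agree (hgq q hqQ) _ _ _ hv1
    rw [hwrep π hπ a, this]
    exact hv2

end step

section util

open Equiv Cardinal

/-- finite sets have maximal elements for trichotomous transitive relations -/
lemma finset_exists_max {α : Type*} (rr : α → α → Prop)
    (htri : ∀ a b, rr a b ∨ a = b ∨ rr b a)
    (htrans : ∀ {a b c}, rr a b → rr b c → rr a c)
    (s : Finset α) (hs : s.Nonempty) :
    ∃ m ∈ s, ∀ x ∈ s, x ≠ m → rr x m := by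
  classical
  induction s using Finset.induction with
  | empty => simp at hs
  | @insert a s ha ih =>
    rcases s.eq_empty_or_nonempty with rfl | hsn
    · exact ⟨a, by simp, by simp⟩
    · obtain ⟨m, hm, hmax⟩ := ih hsn
      rcases htri a m with hc | hc | hc
      · refine ⟨m, by simp [hm], ?_⟩
        intro x hx hxm
        rcases Finset.mem_insert.1 hx with rfl | hx
        · exact hc
        · exact hmax x hx hxm
      · exact absurd (hc ▸ hm) ha
      · refine ⟨a, by simp, ?_⟩
        intro x hx hxa
        rcases Finset.mem_insert.1 hx with rfl | hx
        · exact absurd rfl hxa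
        · rcases eq_or_ne x m with rfl | hxm
          · exact hc
          · exact htrans (hmax x hx hxm) hc

variable {G : Type*} [Group G]

/-- any member of a closure is in the closure of a finite subset -/
lemma exists_finset_closure {S : Set G} {x : G} (hx : x ∈ Subgroup.closure S) :
    ∃ T : Finset G, ↑T ⊆ S ∧ x ∈ Subgroup.closure (↑T : Set G) := by
  classical
  have h2 : x ∈ Submonoid.closure (S ∪ S⁻¹) := by
    rw [← Subgroup.closure_toSubmonoid]; exact hx
  obtain ⟨l, hl, hprod⟩ := Submonoid.exists_list_of_mem_closure h2
  refine ⟨(l.map (fun y => if y ∈ S then y else y⁻¹)).toFinset, ?_, ?_⟩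
  · intro z hz
    simp only [List.coe_toFinset, Set.mem_setOf_eq, List.mem_map] at hz
    obtain ⟨y, hy, rfl⟩ := hz
    by_cases hyS : y ∈ S
    · simpa [hyS]
    · have := hl y hy
      rcases this with h | h
      · exact absurd h hyS
      · rw [Set.mem_inv] at h
        simpa [hyS]
  · rw [← hprod]
    refine Submonoid.list_prod_mem _ ?_
    intro y hy
    by_cases hyS : y ∈ S
    · refine Subgroup.subset_closure ?_
      simp only [List.coe_toFinset, Set.mem_setOf_eq, List.mem_map]
      exact ⟨y, hy, by simp [hyS]⟩
    · have hyi : y⁻¹ ∈ (↑((l.map (fun y => if y ∈ S then y else y⁻¹)).toFinset) : Set G) := by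
        simp only [List.coe_toFinset, Set.mem_setOf_eq, List.mem_map]
        exact ⟨y, hy, by simp [hyS]⟩
      have := Subgroup.subset_closure hyi
      simpa using (Subgroup.closure _).inv_mem this

/-- cardinality bound for closures -/
lemma mk_closure_le (S : Set G) :
    #↥(Subgroup.closure S) ≤ max ℵ₀ (#↥S + #↥S) := by
  classical
  have hinv : #↥(S⁻¹) = #↥S := by
    refine Cardinal.mk_congr ⟨fun x => ⟨(x : G)⁻¹, x.2⟩, fun y => ⟨(y : G)⁻¹, by
      rw [Set.mem_inv]; simpa using y.2⟩, ?_, ?_⟩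
    · intro x; simp
    · intro y; simp
  have hmem : ∀ l : List ↥(S ∪ S⁻¹), ((l.map (fun y : ↥(S ∪ S⁻¹) => y.1)).prod) ∈ Subgroup.closure S := by
    intro l
    induction l with
    | nil => simp
    | cons y t ih =>
      rw [List.map_cons, List.prod_cons]
      refine (Subgroup.closure S).mul_mem ?_ ih
      rcases y.2 with h | h
      · exact Subgroup.subset_closure h
      · rw [Set.mem_inv] at h
        have := (Subgroup.closure S).inv_mem (Subgroup.subset_closure h)
        simpa using this
  have hf : Function.Surjective (fun l : List ↥(S ∪ S⁻¹) =>
      (⟨(l.map (fun y : ↥(S ∪ S⁻¹) => y.1)).prod, hmem l⟩ : ↥(Subgroup.closure S))) := by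
    intro x
    have h2 : (x : G) ∈ Submonoid.closure (S ∪ S⁻¹) := by
      rw [← Subgroup.closure_toSubmonoid]; exact x.2
    obtain ⟨l, hl, hprod⟩ := Submonoid.exists_list_of_mem_closure h2
    refine ⟨l.pmap (fun y h => ⟨y, h⟩) hl, ?_⟩
    refine Subtype.ext ?_
    show (List.map _ (l.pmap _ hl)).prod = (x : G)
    rw [List.map_pmap]
    simpa [List.pmap_eq_map] using hprod
  calc #↥(Subgroup.closure S) ≤ #(List ↥(S ∪ S⁻¹)) := Cardinal.mk_le_of_surjective hf
    _ ≤ max ℵ₀ #↥(S ∪ S⁻¹) := mk_list_le_max _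
    _ ≤ max ℵ₀ (#↥S + #↥S) := by
        refine max_le (le_max_left _ _) (le_trans ?_ (le_max_right _ _))
        refine le_trans (mk_union_le _ _) ?_
        rw [hinv]

end util

section recursion

open Equiv Cardinal

variable {Ω : Type} [Countable Ω] [Infinite Ω]

/-- the type of tasks: pairs of Q-orders together with a finite partial isomorphism -/
abbrev TaskT (Ω : Type) := {t : (Ω → Ω → Prop) × (Ω → Ω → Prop) × Finset (Ω × Ω) //
  QOrder t.1 ∧ QOrder t.2.1 ∧ PIso t.1 t.2.1 t.2.2}

lemma mk_TaskT_le : #(TaskT Ω) ≤ continuum := by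
  have h0 : #Ω = ℵ₀ := mk_eq_aleph0 Ω
  have h1 : #(Ω → Ω → Prop) = continuum := by
    have e1 : #(Ω → Ω → Prop) = #(Ω → Prop) ^ #Ω := (Cardinal.power_def _ _).symm
    have e2 : #(Ω → Prop) = (2 : Cardinal) ^ #Ω := by
      rw [← Cardinal.mk_Prop]
      exact (Cardinal.power_def _ _).symm
    rw [e1, e2, h0, ← Cardinal.power_mul, Cardinal.aleph0_mul_aleph0,
      Cardinal.two_power_aleph0]
  have h2 : #(Finset (Ω × Ω)) ≤ continuum :=
    le_trans mk_le_aleph0 aleph0_le_continuum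
  have h3 : #((Ω → Ω → Prop) × (Ω → Ω → Prop) × Finset (Ω × Ω)) ≤ continuum := by
    rw [Cardinal.mk_prod, Cardinal.mk_prod]
    simp only [Cardinal.lift_id]
    calc #(Ω → Ω → Prop) * (#(Ω → Ω → Prop) * #(Finset (Ω × Ω)))
        ≤ continuum * (continuum * continuum) := by
          exact mul_le_mul' h1.le (mul_le_mul' h1.le h2)
      _ = continuum := by
          rw [Cardinal.mul_eq_self aleph0_le_continuum,
            Cardinal.mul_eq_self aleph0_le_continuum]
  exact le_trans (mk_subtype_le _) h3

variable (hMA : MASigmaCentered) (f₀ : Equiv.Perm Ω)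
variable (rr : TaskT Ω → TaskT Ω → Prop) (hwf : WellFounded rr)

/-- the transfinite recursion: at each task, choose a generic permutation via MA -/
noncomputable def pick : TaskT Ω → Equiv.Perm Ω :=
  hwf.fix (fun t ih =>
    if h : #↥(Subgroup.closure (⋃ s : {s // rr s t}, {ih s.1 s.2})) < continuum ∧
        Inv f₀ (Subgroup.closure (⋃ s : {s // rr s t}, {ih s.1 s.2}))
    then Classical.choose (step hMA f₀
      (Subgroup.closure (⋃ s : {s // rr s t}, {ih s.1 s.2})) h.1 h.2
      t.2.1 t.2.2.1 t.1.2.2 t.2.2.2)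
    else 1)

/-- the set of permutations chosen strictly before `t` -/
def Slt (t : TaskT Ω) : Set (Equiv.Perm Ω) :=
  ⋃ s : {s // rr s t}, {pick hMA f₀ rr hwf s.1}

/-- together with the one chosen at `t` -/
def Sle (t : TaskT Ω) : Set (Equiv.Perm Ω) :=
  Slt hMA f₀ rr hwf t ∪ {pick hMA f₀ rr hwf t}

lemma closure_absorb {G : Type*} [Group G] (X Y : Set G) :
    Subgroup.closure (↑(Subgroup.closure X) ∪ Y) = Subgroup.closure (X ∪ Y) := by
  rw [Subgroup.closure_union, Subgroup.closure_union, Subgroup.closure_eq]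

lemma pick_good (hf₀ : ∀ a, f₀ a ≠ a)
    (hlin : ∀ s t : TaskT Ω, rr s t ∨ s = t ∨ rr t s)
    (htrans : ∀ {a b c : TaskT Ω}, rr a b → rr b c → rr a c)
    (hseg : ∀ t : TaskT Ω, #{s // rr s t} < continuum) :
    ∀ t : TaskT Ω,
      Inv f₀ (Subgroup.closure (Sle hMA f₀ rr hwf t)) ∧
      (∀ a b, t.1.2.1 (pick hMA f₀ rr hwf t a) (pick hMA f₀ rr hwf t b) ↔ t.1.1 a b) ∧
      (∀ p ∈ t.1.2.2, pick hMA f₀ rr hwf t p.1 = p.2) := by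
  intro t
  induction t using WellFounded.induction hwf with
  | _ t ih =>
  -- the invariant below t
  have hInvLt : Inv f₀ (Subgroup.closure (Slt hMA f₀ rr hwf t)) := by
    intro T hT
    have hfin : ∀ π ∈ T, ∃ W : Finset (Equiv.Perm Ω),
        ↑W ⊆ Slt hMA f₀ rr hwf t ∧ π ∈ Subgroup.closure (↑W : Set (Equiv.Perm Ω)) :=
      fun π hπ => exists_finset_closure (hT hπ)
    choose W hW1 hW2 using hfin
    classical
    set WW : Finset (Equiv.Perm Ω) := T.attach.biUnion (fun π => W π.1 π.2) with hWW
    have hWW1 : ↑WW ⊆ Slt hMA f₀ rr hwf t := by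
      intro g hg
      rw [hWW] at hg
      simp only [Finset.coe_biUnion, Set.mem_iUnion, Finset.mem_coe] at hg
      obtain ⟨π, _, hπ2⟩ := hg
      exact hW1 π.1 π.2 hπ2
    have hTW : ∀ π ∈ T, π ∈ Subgroup.closure (↑WW : Set (Equiv.Perm Ω)) := by
      intro π hπ
      refine Subgroup.closure_mono ?_ (hW2 π hπ)
      intro g hg
      rw [hWW]
      simp only [Finset.coe_biUnion, Set.mem_iUnion, Finset.mem_coe]
      exact ⟨⟨π, hπ⟩, Finset.mem_attach _ _, hg⟩
    rcases WW.eq_empty_or_nonempty with hWWe | hWWn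
    · -- all elements of T are 1
      have hT1 : ∀ π ∈ T, π = 1 := by
        intro π hπ
        have := hTW π hπ
        rw [hWWe] at this
        simpa [Subgroup.closure_empty] using this
      have : {a | ∀ π ∈ T, π a ≠ f₀ a} = Set.univ := by
        ext a
        simp only [Set.mem_setOf_eq, Set.mem_univ, iff_true]
        intro π hπ
        rw [hT1 π hπ]
        exact fun hc => hf₀ a hc.symm
      rw [this]
      exact Set.infinite_univ
    · -- pick witnesses and take the maximum
      have hwit : ∀ g ∈ WW, ∃ s : {s // rr s t}, pick hMA f₀ rr hwf s.1 = g := by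
        intro g hg
        have := hWW1 hg
        simpa [Slt, Set.mem_iUnion] using this
      choose wit hwitp using hwit
      set SS : Finset (TaskT Ω) := WW.attach.image (fun g => (wit g.1 g.2).1) with hSS
      have hSSn : SS.Nonempty := by
        obtain ⟨g, hg⟩ := hWWn
        exact ⟨(wit g hg).1, by
          rw [hSS]
          exact Finset.mem_image.2 ⟨⟨g, hg⟩, Finset.mem_attach _ _, rfl⟩⟩
      obtain ⟨m, hmSS, hmmax⟩ := finset_exists_max rr hlin (fun h1 h2 => htrans h1 h2) SS hSSn
      have hmt : rr m t := by
        rw [hSS] at hmSS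
        obtain ⟨g, _, rfl⟩ := Finset.mem_image.1 hmSS
        exact (wit g.1 g.2).2
      have hWWle : ↑WW ⊆ Sle hMA f₀ rr hwf m := by
        intro g hg
        have hsg : (wit g hg).1 ∈ SS := by
          rw [hSS]
          exact Finset.mem_image.2 ⟨⟨g, hg⟩, Finset.mem_attach _ _, rfl⟩
        rcases eq_or_ne (wit g hg).1 m with he | hne
        · right
          rw [← hwitp g hg, he]
          rfl
        · left
          rw [Slt, Set.mem_iUnion]
          refine ⟨⟨(wit g hg).1, hmmax _ hsg hne⟩, ?_⟩
          exact Set.mem_singleton_iff.2 (hwitp g hg).symm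
      have hTm : ↑T ⊆ (Subgroup.closure (Sle hMA f₀ rr hwf m) : Set (Equiv.Perm Ω)) := by
        intro π hπ
        exact Subgroup.closure_mono hWWle (hTW π hπ)
      exact (ih m hmt).1 T hTm
  -- the cardinality bound below t
  have hcardLt : #↥(Subgroup.closure (Slt hMA f₀ rr hwf t)) < continuum := by
    have h1 : #↥(Slt hMA f₀ rr hwf t) < continuum := by
      have : Slt hMA f₀ rr hwf t = Set.range (fun s : {s // rr s t} => pick hMA f₀ rr hwf s.1) := by
        rw [Slt, Set.iUnion_singleton_eq_range]
      rw [this]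
      exact lt_of_le_of_lt mk_range_le (hseg t)
    refine lt_of_le_of_lt (mk_closure_le _) ?_
    exact max_lt aleph0_lt_continuum (add_lt_of_lt aleph0_le_continuum h1 h1)
  -- unfold the recursion at t
  have hcond : #↥(Subgroup.closure (⋃ s : {s // rr s t}, {pick hMA f₀ rr hwf s.1})) < continuum ∧
      Inv f₀ (Subgroup.closure (⋃ s : {s // rr s t}, {pick hMA f₀ rr hwf s.1})) :=
    ⟨hcardLt, hInvLt⟩
  have hpe : pick hMA f₀ rr hwf t = Classical.choose (step hMA f₀
      (Subgroup.closure (⋃ s : {s // rr s t}, {pick hMA f₀ rr hwf s.1})) hcond.1 hcond.2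
      t.2.1 t.2.2.1 t.1.2.2 t.2.2.2) := by
    show hwf.fix _ t = _
    rw [WellFounded.fix_eq]
    exact dif_pos hcond
  obtain ⟨hiso, hext, hinv⟩ := Classical.choose_spec (step hMA f₀
      (Subgroup.closure (⋃ s : {s // rr s t}, {pick hMA f₀ rr hwf s.1})) hcond.1 hcond.2
      t.2.1 t.2.2.1 t.1.2.2 t.2.2.2)
  rw [← hpe] at hiso hext hinv
  refine ⟨?_, hiso, hext⟩
  have heq : Subgroup.closure (Sle hMA f₀ rr hwf t) =
      Subgroup.closure (↑(Subgroup.closure (⋃ s : {s // rr s t}, {pick hMA f₀ rr hwf s.1}))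
        ∪ {pick hMA f₀ rr hwf t}) := by
    rw [closure_absorb]
    rfl
  rw [heq]
  exact hinv

lemma pick_inv_range (hf₀ : ∀ a, f₀ a ≠ a)
    (hlin : ∀ s t : TaskT Ω, rr s t ∨ s = t ∨ rr t s)
    (htrans : ∀ {a b c : TaskT Ω}, rr a b → rr b c → rr a c)
    (hseg : ∀ t : TaskT Ω, #{s // rr s t} < continuum) :
    Inv f₀ (Subgroup.closure (Set.range (pick hMA f₀ rr hwf))) := by
  intro T hT
  have hfin : ∀ π ∈ T, ∃ W : Finset (Equiv.Perm Ω),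
      ↑W ⊆ Set.range (pick hMA f₀ rr hwf) ∧
        π ∈ Subgroup.closure (↑W : Set (Equiv.Perm Ω)) :=
    fun π hπ => exists_finset_closure (hT hπ)
  choose W hW1 hW2 using hfin
  classical
  set WW : Finset (Equiv.Perm Ω) := T.attach.biUnion (fun π => W π.1 π.2) with hWW
  have hWW1 : ↑WW ⊆ Set.range (pick hMA f₀ rr hwf) := by
    intro g hg
    rw [hWW] at hg
    simp only [Finset.coe_biUnion, Set.mem_iUnion, Finset.mem_coe] at hg
    obtain ⟨π, _, hπ2⟩ := hg
    exact hW1 π.1 π.2 hπ2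
  have hTW : ∀ π ∈ T, π ∈ Subgroup.closure (↑WW : Set (Equiv.Perm Ω)) := by
    intro π hπ
    refine Subgroup.closure_mono ?_ (hW2 π hπ)
    intro g hg
    rw [hWW]
    simp only [Finset.coe_biUnion, Set.mem_iUnion, Finset.mem_coe]
    exact ⟨⟨π, hπ⟩, Finset.mem_attach _ _, hg⟩
  rcases WW.eq_empty_or_nonempty with hWWe | hWWn
  · have hT1 : ∀ π ∈ T, π = 1 := by
      intro π hπ
      have := hTW π hπ
      rw [hWWe] at this
      simpa [Subgroup.closure_empty] using this
    have : {a | ∀ π ∈ T, π a ≠ f₀ a} = Set.univ := by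
      ext a
      simp only [Set.mem_setOf_eq, Set.mem_univ, iff_true]
      intro π hπ
      rw [hT1 π hπ]
      exact fun hc => hf₀ a hc.symm
    rw [this]
    exact Set.infinite_univ
  · have hwit : ∀ g ∈ WW, ∃ s : TaskT Ω, pick hMA f₀ rr hwf s = g := by
      intro g hg
      exact hWW1 hg
    choose wit hwitp using hwit
    set SS : Finset (TaskT Ω) := WW.attach.image (fun g => wit g.1 g.2) with hSS
    have hSSn : SS.Nonempty := by
      obtain ⟨g, hg⟩ := hWWn
      exact ⟨wit g hg, by
        rw [hSS]
        exact Finset.mem_image.2 ⟨⟨g, hg⟩, Finset.mem_attach _ _, rfl⟩⟩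
    obtain ⟨m, hmSS, hmmax⟩ := finset_exists_max rr hlin (fun h1 h2 => htrans h1 h2) SS hSSn
    have hWWle : ↑WW ⊆ Sle hMA f₀ rr hwf m := by
      intro g hg
      have hsg : wit g hg ∈ SS := by
        rw [hSS]
        exact Finset.mem_image.2 ⟨⟨g, hg⟩, Finset.mem_attach _ _, rfl⟩
      rcases eq_or_ne (wit g hg) m with he | hne
      · right
        rw [← hwitp g hg, he]
        rfl
      · left
        rw [Slt, Set.mem_iUnion]
        refine ⟨⟨wit g hg, hmmax _ hsg hne⟩, ?_⟩
        exact Set.mem_singleton_iff.2 (hwitp g hg).symm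
    have hTm : ↑T ⊆ (Subgroup.closure (Sle hMA f₀ rr hwf m) : Set (Equiv.Perm Ω)) := by
      intro π hπ
      exact Subgroup.closure_mono hWWle (hTW π hπ)
    exact (pick_good hMA f₀ rr hwf hf₀ hlin (fun h1 h2 => htrans h1 h2) hseg m).1 T hTm

end recursion

section final

open Equiv Cardinal

variable {Ω : Type} [Countable Ω] [Infinite Ω]

lemma qTransport {r : Ω → Ω → Prop} (h : QOrder r) (σ : Equiv.Perm Ω) :
    QOrder (fun x y => r (σ x) (σ y)) := by
  refine ⟨?_, ?_, ?_, ?_⟩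
  · refine @IsStrictTotalOrder.mk _ _ ⟨?_⟩ (@IsStrictOrder.mk _ _ ⟨?_⟩ ⟨?_⟩)
    · intro a b h1 h2
      exact σ.injective (h.1.toTrichotomous.trichotomous _ _ h1 h2)
    · intro a
      exact qIrrefl h (σ a)
    · intro a b c h1 h2
      exact qTrans h h1 h2
  · intro a b hab
    obtain ⟨c, h1, h2⟩ := h.2.1 (σ a) (σ b) hab
    refine ⟨σ.symm c, ?_, ?_⟩
    · simpa using h1
    · simpa using h2
  · intro a
    obtain ⟨b, hb⟩ := h.2.2.1 (σ a)
    exact ⟨σ.symm b, by simpa using hb⟩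
  · intro a
    obtain ⟨b, hb⟩ := h.2.2.2 (σ a)
    exact ⟨σ.symm b, by simpa using hb⟩

lemma qorder_pullback (e : Ω ≃ ℚ) : QOrder (fun x y => e x < e y) := by
  refine ⟨?_, ?_, ?_, ?_⟩
  · refine @IsStrictTotalOrder.mk _ _ ⟨?_⟩ (@IsStrictOrder.mk _ _ ⟨?_⟩ ⟨?_⟩)
    · intro a b h1 h2
      exact e.injective (le_antisymm (not_lt.1 h2) (not_lt.1 h1))
    · intro a
      exact lt_irrefl (e a)
    · intro a b c h1 h2
      exact lt_trans h1 h2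
  · intro a b hab
    obtain ⟨c, h1, h2⟩ := exists_between hab
    exact ⟨e.symm c, by simpa using h1, by simpa using h2⟩
  · intro a
    obtain ⟨c, hc⟩ := exists_gt (e a)
    exact ⟨e.symm c, by simpa using hc⟩
  · intro a
    obtain ⟨c, hc⟩ := exists_lt (e a)
    exact ⟨e.symm c, by simpa using hc⟩

end final
end Nine42

/-- (MA(σ-centered)) There exists a proper dense subgroup `G < Sym(Ω)` (Ω countably
infinite) which is transitive on `Ω` and acts transitively on the set of linear orders on `Ω`
of order type `ℚ`, by transport of structure. -/
theorem stmt_16 (Ω : Type) [Countable Ω] [Infinite Ω] (hMA : MASigmaCentered) :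
    ∃ G : Subgroup (Equiv.Perm Ω), G ≠ ⊤ ∧
      (∀ h : Equiv.Perm Ω, ∀ S : Finset Ω, ∃ g ∈ G, ∀ a ∈ S, g a = h a) ∧
      (∀ a b : Ω, ∃ g ∈ G, g a = b) ∧
      ∀ r₁ r₂ : Ω → Ω → Prop, QOrder r₁ → QOrder r₂ →
        ∃ g ∈ G, ∀ a b : Ω, r₂ (g a) (g b) ↔ r₁ a b := by
  classical
  open Nine42 Cardinal in
  -- a fixed-point-free permutation
  obtain ⟨eZ⟩ : Nonempty (Ω ≃ ℤ) := nonempty_equiv_of_countable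
  set f₀ : Equiv.Perm Ω := eZ.trans ((Equiv.addRight (1 : ℤ)).trans eZ.symm) with hf₀def
  have hf₀ : ∀ a, f₀ a ≠ a := by
    intro a hc
    rw [hf₀def] at hc
    simp only [Equiv.trans_apply, Equiv.coe_addRight] at hc
    have := congrArg eZ hc
    rw [Equiv.apply_symm_apply] at this
    omega
  -- a base Q-order
  obtain ⟨eQ⟩ : Nonempty (Ω ≃ ℚ) := nonempty_equiv_of_countable
  set r₀ : Ω → Ω → Prop := fun x y => eQ x < eQ y with hr₀def
  have hr₀ : QOrder r₀ := qorder_pullback eQ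
  -- a well-order of the tasks with small initial segments
  have hle : #(TaskT Ω) ≤ #(continuum.ord.ToType) := by
    rw [Cardinal.mk_toType, card_ord]
    exact mk_TaskT_le
  obtain ⟨emb⟩ := (Cardinal.le_def _ _).1 hle
  set rr : TaskT Ω → TaskT Ω → Prop := fun s t => emb s < emb t with hrrdef
  have hwf : WellFounded rr := InvImage.wf (fun t => emb t) wellFounded_lt
  have hlin : ∀ s t : TaskT Ω, rr s t ∨ s = t ∨ rr t s := by
    intro s t
    rcases lt_trichotomy (emb s) (emb t) with h1 | h1 | h1
    · exact Or.inl h1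
    · exact Or.inr (Or.inl (emb.injective h1))
    · exact Or.inr (Or.inr h1)
  have htrans : ∀ {a b c : TaskT Ω}, rr a b → rr b c → rr a c := by
    intro a b c h1 h2
    exact lt_trans h1 h2
  have hseg : ∀ t : TaskT Ω, #{s // rr s t} < continuum := by
    intro t
    have hinj : Function.Injective
        (fun s : {s // rr s t} => (⟨emb s.1, s.2⟩ : Set.Iio (emb t))) := by
      intro s s' hss
      have : emb s.1 = emb s'.1 := congrArg Subtype.val hss
      exact Subtype.ext (emb.injective this)
    exact lt_of_le_of_lt (Cardinal.mk_le_of_injective hinj) (Cardinal.mk_Iio_ord_toType _)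
  -- the construction
  have pg := pick_good hMA f₀ rr hwf hf₀ hlin (fun h1 h2 => htrans h1 h2) hseg
  have pinv := pick_inv_range hMA f₀ rr hwf hf₀ hlin (fun h1 h2 => htrans h1 h2) hseg
  set G : Subgroup (Equiv.Perm Ω) := Subgroup.closure (Set.range (pick hMA f₀ rr hwf))
    with hGdef
  have hmemG : ∀ t : TaskT Ω, pick hMA f₀ rr hwf t ∈ G := by
    intro t
    exact Subgroup.subset_closure (Set.mem_range_self t)
  -- density
  have hdens : ∀ h : Equiv.Perm Ω, ∀ S : Finset Ω, ∃ g ∈ G, ∀ a ∈ S, g a = h a := by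
    intro h S
    set r₂ : Ω → Ω → Prop := fun x y => r₀ (h.symm x) (h.symm y) with hr₂def
    have hr₂ : QOrder r₂ := qTransport hr₀ (h.symm : Equiv.Perm Ω)
    set p₀ : Finset (Ω × Ω) := S.image (fun x => (x, h x)) with hp₀def
    have hp₀ : PIso r₀ r₂ p₀ := by
      intro p hp p' hp'
      rw [hp₀def] at hp hp'
      obtain ⟨x, hx, rfl⟩ := Finset.mem_image.1 hp
      obtain ⟨y, hy, rfl⟩ := Finset.mem_image.1 hp'
      refine ⟨⟨fun hc => congrArg h hc, fun hc => h.injective hc⟩, ?_⟩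
      show r₀ x y ↔ r₂ (h x) (h y)
      rw [hr₂def]
      simp only [Equiv.symm_apply_apply]
    set t : TaskT Ω := ⟨(r₀, r₂, p₀), hr₀, hr₂, hp₀⟩ with htdef
    refine ⟨pick hMA f₀ rr hwf t, hmemG t, ?_⟩
    intro a ha
    have hextend := (pg t).2.2
    have hmem : ((a, h a) : Ω × Ω) ∈ p₀ := by
      rw [hp₀def]
      exact Finset.mem_image.2 ⟨a, ha, rfl⟩
    exact hextend (a, h a) hmem
  refine ⟨G, ?_, hdens, ?_, ?_⟩
  · -- proper
    intro hGtop
    have hf₀G : f₀ ∈ G := by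
      rw [hGtop]
      exact Subgroup.mem_top f₀
    have hinf := pinv {f₀} (by
      intro π hπ
      simp only [Finset.coe_singleton, Set.mem_singleton_iff] at hπ
      subst hπ
      exact hf₀G)
    obtain ⟨a, ha⟩ := hinf.nonempty
    exact ha f₀ (Finset.mem_singleton_self f₀) rfl
  · -- transitive on Ω
    intro a b
    obtain ⟨g, hg, hga⟩ := hdens (Equiv.swap a b) {a}
    refine ⟨g, hg, ?_⟩
    rw [hga a (Finset.mem_singleton_self a)]
    exact Equiv.swap_apply_left a b
  · -- transitive on Q-orders
    intro r₁ r₂ hq₁ hq₂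
    have hp : PIso r₁ r₂ (∅ : Finset (Ω × Ω)) := by
      intro p hp
      exact absurd hp (Finset.notMem_empty p)
    set t : TaskT Ω := ⟨(r₁, r₂, ∅), hq₁, hq₂, hp⟩ with htdef
    exact ⟨pick hMA f₀ rr hwf t, hmemG t, fun a b => (pg t).2.1 a b⟩
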